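/- Let α = (1+√5)/2 in the ring of integers 𝒪 = ℤ[α] of ℚ(√5). For any β = a + bα ∈ 𝒪 with a, b ∈ ℤ, the coefficient of α in β³ is even; consequently α is not a sum of cubes of elements of 𝒪. -/

import Mathlib

theorem golden_not_sum_of_cubes (R : Type*) [CommRing R] (α : R) (hα : α ^ 2 = α + 1)
    (b : Module.Basis (Fin 2) ℤ R) (hb0 : b 0 = 1) (hb1 : b 1 = α) :
    (∀ a c : ℤ, ∃ m n : ℤ, ((a : R) + (c : R) * α) ^ 3 = (m : R) + ((2 * n : ℤ) : R) * α) ∧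
    ¬ ∃ (l : ℕ) (β : Fin l → R), α = ∑ i, (β i) ^ 3 := by
  have key : ∀ a c : ℤ, ∃ m n : ℤ,
      ((a : R) + (c : R) * α) ^ 3 = (m : R) + ((2 * n : ℤ) : R) * α := by
    intro a c
    obtain ⟨k, hk⟩ : Even (a * c * (a + c)) := by
      rcases Int.even_or_odd a with ha | ha
      · exact (ha.mul_right c).mul_right _
      · rcases Int.even_or_odd c with hc | hc
        · exact (hc.mul_left a).mul_right _
        · exact Even.mul_left (ha.add_odd hc) _
    refine ⟨a ^ 3 + 3 * a * c ^ 2 + c ^ 3, 3 * k + c ^ 3, ?_⟩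
    have hk' : (a : R) * c * (a + c) = (k : R) + k := by
      have := congrArg (fun z : ℤ => (z : R)) hk; push_cast at this; exact this
    push_cast
    linear_combination (3 * (a : R) * c ^ 2 + (c : R) ^ 3 * (α + 1)) * hα + 3 * α * hk'
  refine ⟨key, ?_⟩
  rintro ⟨l, β, hβ⟩
  have hrep : ∀ x : R, ∃ p q : ℤ, x = (p : R) + (q : R) * α := by
    intro x
    refine ⟨b.repr x 0, b.repr x 1, ?_⟩
    conv_lhs => rw [← b.sum_repr x]
    rw [Fin.sum_univ_two, hb0, hb1]
    simp [zsmul_eq_mul]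
  have hcoord : ∀ p q : ℤ, b.repr ((p : R) + (q : R) * α) 1 = q := by
    intro p q
    have h : (p : R) + (q : R) * α = p • b 0 + q • b 1 := by
      rw [hb0, hb1]; push_cast [zsmul_eq_mul]; ring
    rw [h, map_add, map_smul, map_smul]
    simp [b.repr_self, Finsupp.single_apply]
  choose p q hpq using fun i => hrep (β i)
  choose m n hmn using fun i => key (p i) (q i)
  have hterm : ∀ i, β i ^ 3 = (m i : R) + 2 * (n i : R) * α := fun i => by
    rw [hpq i]
    have := hmn i; push_cast at this; exact this
  have hsum : α = ((∑ i, m i : ℤ) : R) + ((2 * ∑ i, n i : ℤ) : R) * α := by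
    refine hβ.trans ?_
    push_cast
    simp_rw [hterm]
    rw [Finset.sum_add_distrib, ← Finset.sum_mul, ← Finset.mul_sum]
  have h1 : b.repr α 1 = 1 := by
    rw [← hb1]; simp [b.repr_self]
  have h2 : b.repr α 1 = 2 * ∑ i, n i := by
    conv_lhs => rw [hsum]
    exact hcoord _ _
  omega
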